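/- Let f ∈ Γ(X). Assume σ is Farkas–Minkowski and f is finite and continuous at some point of A. Then epi f* + K = epi (f + δ_A)*, and in particular epi f* + K is weak*-closed. -/

import Mathlib

open Pointwise

noncomputable section

variable {X : Type*} [AddCommGroup X] [Module ℝ X] [TopologicalSpace X]

/-- Fenchel conjugate, as a function on the weak-* dual. -/
def conjFn (h : X → EReal) : WeakDual ℝ X → EReal :=
  fun p => ⨆ x : X, (p x : EReal) - h x

/-- Epigraph of an extended-real-valued function. -/
def epiFn {V : Type*} (h : V → EReal) : Set (V × ℝ) :=
  {q | h q.1 ≤ (q.2 : EReal)}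

/-- Graph of an extended-real-valued function (where it is finite). -/
def gphFn {V : Type*} (h : V → EReal) : Set (V × ℝ) :=
  {q | h q.1 = (q.2 : EReal)}

/-- Effective domain. -/
def domFn {V : Type*} (h : V → EReal) : Set V :=
  {x | h x < ⊤}

open Classical in
/-- Indicator function of a set. -/
def indicatorE {V : Type*} (D : Set V) : V → EReal :=
  fun x => if x ∈ D then (0 : EReal) else ⊤

/-- Convex cone generated by `D ∪ {0}`. -/
def coneGen {V : Type*} [AddCommGroup V] [Module ℝ V] (D : Set V) : Set V :=
  {0} ∪ {y | ∃ t : ℝ, 0 ≤ t ∧ ∃ x ∈ convexHull ℝ D, y = t • x}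

/-- `h ∈ Γ(X)`: proper, convex and lower semicontinuous. -/
def InGamma (h : X → EReal) : Prop :=
  (∀ x, h x ≠ ⊥) ∧ (∃ x, h x ≠ ⊤) ∧
    Convex ℝ {q : X × ℝ | h q.1 ≤ (q.2 : EReal)} ∧ LowerSemicontinuous h

/-- Solution set `A` of the system `σ = {f i x ≤ 0, i ∈ I; x ∈ C}`. -/
def solSet {I : Type*} (C : Set X) (f : I → X → EReal) : Set X :=
  {x | x ∈ C ∧ ∀ i, f i x ≤ (0 : EReal)}

/-- Characteristic cone `K = cone (epi δ_C* ∪ ⋃ i, epi f_i*)` of the system. -/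
def charCone {I : Type*} (C : Set X) (f : I → X → EReal) : Set (WeakDual ℝ X × ℝ) :=
  coneGen (epiFn (conjFn (indicatorE C)) ∪ ⋃ i, epiFn (conjFn (f i)))

/-- Barrier cone `barr C = dom δ_C*`. -/
def barCone (C : Set X) : Set (WeakDual ℝ X) :=
  domFn (conjFn (indicatorE C))

/-- The Farkas–Minkowski constraint qualification. -/
def IsFM {I : Type*} (C : Set X) (f : I → X → EReal) : Prop :=
  (solSet C f).Nonempty ∧ IsClosed (charCone C f)

/-- Recession function `h^∞ = δ*_{dom h*}`. -/
def recFn (h : X → EReal) : X → EReal :=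
  fun x => ⨆ q ∈ domFn (conjFn h), ((q x : ℝ) : EReal)

/-- Recession cone `D^∞ = ⋂_{t>0} t (D - a)`, for any `a ∈ D`. -/
def recCone (D : Set X) : Set X :=
  {d | ∀ a ∈ D, ∀ t : ℝ, 0 < t → d ∈ t • (D - ({a} : Set X))}

/-- Subdifferential of `h` at `a`. -/
def subdiff (h : X → EReal) (a : X) : Set (WeakDual ℝ X) :=
  {p | (∃ r : ℝ, h a = (r : EReal)) ∧ ∀ x, h a + ((p (x - a) : ℝ) : EReal) ≤ h x}

open Set Topology Filter
set_option linter.unusedSectionVars false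

instance : LocallyConvexSpace ℝ (WeakDual ℝ X) :=
  inferInstanceAs (LocallyConvexSpace ℝ (WeakBilin (topDualPairing ℝ X)))

lemma weakdual_exists_eval (G : WeakDual ℝ X →L[ℝ] ℝ) : ∃ x : X, ∀ p : WeakDual ℝ X, G p = p x := by
  classical
  have hb := (topDualPairing ℝ X).hasBasis_weakBilin
  have h0 : G ⁻¹' (Set.Ioo (-1 : ℝ) 1) ∈ 𝓝 (0 : WeakDual ℝ X) := by
    apply G.continuous.continuousAt.preimage_mem_nhds
    rw [map_zero]
    exact isOpen_Ioo.mem_nhds (by norm_num)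
  replace h0 := hb.mem_iff.1 h0
  obtain ⟨U, hU, hsub⟩ := h0
  obtain ⟨s, r, hr, rfl⟩ := (SeminormFamily.basisSets_iff _).1 hU
  -- key : vanishing on evals at s implies G vanishes
  have key : ∀ p : WeakDual ℝ X, (∀ x ∈ s, p x = 0) → G p = 0 := by
    intro p hp
    by_contra hGp
    have hmem : ∀ c : ℝ, c • p ∈ (s.sup ((topDualPairing ℝ X).toSeminormFamily)).ball 0 r := by
      intro c
      refine (Seminorm.mem_ball_zero _).2 ?_
      apply Seminorm.finset_sup_apply_lt hr
      intro x hx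
      show ‖c * p x‖ < r
      rw [hp x hx, mul_zero, norm_zero]
      exact hr
    have habs : ∀ c : ℝ, |c * G p| < 1 := by
      intro c
      have this : G (c • p) ∈ Set.Ioo (-1:ℝ) 1 := hsub (hmem c)
      simp only [id, Set.mem_preimage, Set.mem_Ioo, map_smul] at this
      rw [abs_lt]
      exact ⟨this.1, this.2⟩
    have := habs (2 / |G p|)
    rw [abs_mul, abs_div, abs_abs, abs_two, div_mul_cancel₀] at this
    · norm_num at this
    · simpa using hGp
  let L : {x // x ∈ s} → (WeakDual ℝ X →ₗ[ℝ] ℝ) := fun x => (topDualPairing ℝ X).flip x.1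
  have hker : ⨅ x : {x // x ∈ s}, LinearMap.ker (L x) ≤ LinearMap.ker (G : WeakDual ℝ X →ₗ[ℝ] ℝ) := by
    intro p hp
    simp only [Submodule.mem_iInf, LinearMap.mem_ker] at hp ⊢
    exact key p (fun x hx => hp ⟨x, hx⟩)
  have hspan := mem_span_of_iInf_ker_le_ker hker
  obtain ⟨c, hc⟩ := (Submodule.mem_span_range_iff_exists_fun ℝ).1 hspan
  refine ⟨∑ x : {x // x ∈ s}, c x • (x.1 : X), fun p => ?_⟩
  have := congrFun (congrArg (fun (f : WeakDual ℝ X →ₗ[ℝ] ℝ) => (f : WeakDual ℝ X → ℝ)) hc) p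
  simp only [LinearMap.coe_sum, Finset.sum_apply, LinearMap.smul_apply] at this
  rw [show (G : WeakDual ℝ X →ₗ[ℝ] ℝ) p = G p from rfl] at this
  rw [← this, map_sum]
  congr 1
  ext x
  rw [map_smul]
  rfl

lemma mem_epi_conj_iff {h : X → EReal} {p : WeakDual ℝ X} {r : ℝ} :
    (p, r) ∈ epiFn (conjFn h) ↔ ∀ x, ((p x - r : ℝ) : EReal) ≤ h x := by
  simp only [epiFn, conjFn, Set.mem_setOf_eq, iSup_le_iff]
  apply forall_congr'
  intro x
  induction h x with
  | bot => simp [EReal.coe_sub_bot, ← EReal.coe_sub]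
  | coe v =>
      rw [show ((p x : ℝ) : EReal) - (v : EReal) = ((p x - v : ℝ) : EReal) from (EReal.coe_sub _ _).symm,
        EReal.coe_le_coe_iff, EReal.coe_le_coe_iff]
      constructor <;> intro <;> linarith
  | top => simp

lemma isClosed_epi_conj (h : X → EReal) : IsClosed (epiFn (conjFn h)) := by
  have heq : epiFn (conjFn h) =
      ⋂ x : X, {q : WeakDual ℝ X × ℝ | ((q.1 x - q.2 : ℝ) : EReal) ≤ h x} := by
    ext q
    rw [Set.mem_iInter, show q = (q.1, q.2) from rfl]
    exact mem_epi_conj_iff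
  rw [heq]
  apply isClosed_iInter
  intro x
  have hcont : Continuous fun q : WeakDual ℝ X × ℝ => q.1 x - q.2 :=
    ((WeakDual.eval_continuous x).comp continuous_fst).sub continuous_snd
  induction h x with
  | bot =>
      have : {q : WeakDual ℝ X × ℝ | ((q.1 x - q.2 : ℝ) : EReal) ≤ ⊥} = ∅ := by
        ext q; simp [← EReal.coe_sub]
      rw [this]; exact isClosed_empty
  | coe v => simpa only [EReal.coe_le_coe_iff] using isClosed_le hcont continuous_const
  | top => simp only [le_top]; exact isClosed_univ

lemma zero_mem_coneGen {V : Type*} [AddCommGroup V] [Module ℝ V] (D : Set V) :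
    0 ∈ coneGen D := Or.inl rfl

lemma subset_coneGen {V : Type*} [AddCommGroup V] [Module ℝ V] (D : Set V) : D ⊆ coneGen D :=
  fun x hx => Or.inr ⟨1, zero_le_one, x, subset_convexHull ℝ D hx, (one_smul ℝ x).symm⟩

lemma coneGen_subset {V : Type*} [AddCommGroup V] [Module ℝ V] {D P : Set V} (hDP : D ⊆ P)
    (hP : Convex ℝ P) (h0 : (0:V) ∈ P) (hsmul : ∀ t : ℝ, 0 ≤ t → ∀ x ∈ P, t • x ∈ P) :
    coneGen D ⊆ P := by
  rintro z (hz | ⟨t, ht, x, hx, rfl⟩)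
  · rw [Set.mem_singleton_iff] at hz; subst hz; exact h0
  · exact hsmul t ht x (convexHull_min hDP hP hx)

lemma coneGen_smul_mem {V : Type*} [AddCommGroup V] [Module ℝ V] {D : Set V} {t : ℝ}
    (ht : 0 ≤ t) {z : V} (hz : z ∈ coneGen D) : t • z ∈ coneGen D := by
  rcases hz with hz | ⟨s, hs, x, hx, rfl⟩
  · rw [Set.mem_singleton_iff] at hz; subst hz
    rw [smul_zero]; exact zero_mem_coneGen D
  · exact Or.inr ⟨t * s, mul_nonneg ht hs, x, hx, smul_smul t s x⟩

lemma coneGen_convex {V : Type*} [AddCommGroup V] [Module ℝ V] (D : Set V) :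
    Convex ℝ (coneGen D) := by
  intro u hu v hv a b ha hb hab
  rcases hu with hu | ⟨s, hs, x, hx, rfl⟩
  · rw [Set.mem_singleton_iff] at hu; subst hu
    rw [smul_zero, zero_add]
    exact coneGen_smul_mem hb hv
  rcases hv with hv | ⟨s', hs', y, hy, rfl⟩
  · rw [Set.mem_singleton_iff] at hv; subst hv
    rw [smul_zero, add_zero]
    exact coneGen_smul_mem ha (Or.inr ⟨s, hs, x, hx, rfl⟩)
  · set cde := a * s + b * s' with hc
    rcases eq_or_lt_of_le (add_nonneg (mul_nonneg ha hs) (mul_nonneg hb hs')) with hc0 | hcpos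
    · -- both terms zero
      have h1 : a * s = 0 := by nlinarith [mul_nonneg ha hs, mul_nonneg hb hs']
      have h2 : b * s' = 0 := by nlinarith [mul_nonneg ha hs, mul_nonneg hb hs']
      left
      rw [Set.mem_singleton_iff, smul_smul, smul_smul, h1, h2, zero_smul, zero_smul, add_zero]
    · right
      refine ⟨cde, le_of_lt hcpos, (a * s / cde) • x + (b * s' / cde) • y, ?_, ?_⟩
      · exact (convex_convexHull ℝ D) hx hy (by positivity) (by positivity)
          (by field_simp; rw [hc]; exact div_self (ne_of_gt hcpos))
      · rw [smul_add, smul_smul, smul_smul, smul_smul, smul_smul]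
        rw [mul_div_cancel₀ _ (ne_of_gt hcpos), mul_div_cancel₀ _ (ne_of_gt hcpos)]

lemma isClosed_epiFn {h : X → EReal} (hlsc : LowerSemicontinuous h) : IsClosed (epiFn h) := by
  rw [← isOpen_compl_iff, isOpen_iff_mem_nhds]
  rintro ⟨x, t⟩ hxt
  simp only [Set.mem_compl_iff, epiFn, Set.mem_setOf_eq, not_le] at hxt
  obtain ⟨t', ht1, ht2⟩ := EReal.exists_between_coe_real hxt
  have hV : {y | (t' : EReal) < h y} ∈ 𝓝 x := hlsc x t' ht2
  refine Filter.mem_of_superset (prod_mem_nhds hV (Iio_mem_nhds (EReal.coe_lt_coe_iff.1 ht1))) ?_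
  rintro ⟨y, s⟩ ⟨hy, hsm⟩
  simp only [Set.mem_compl_iff, epiFn, Set.mem_setOf_eq, not_le]
  exact lt_trans (by exact_mod_cast hsm) hy

omit [AddCommGroup X] [Module ℝ X] in
lemma isClosed_sublevel {h : X → EReal} (hlsc : LowerSemicontinuous h) :
    IsClosed {x | h x ≤ 0} := by
  rw [← isOpen_compl_iff, isOpen_iff_mem_nhds]
  intro x hx
  simp only [Set.mem_compl_iff, Set.mem_setOf_eq, not_le] at hx
  refine Filter.mem_of_superset (hlsc x 0 hx) ?_
  intro y hy
  simp only [Set.mem_compl_iff, Set.mem_setOf_eq, not_le]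
  exact hy

section Separation
variable [IsTopologicalAddGroup X] [ContinuousSMul ℝ X] [LocallyConvexSpace ℝ X]

lemma EReal.exists_coe' {a : EReal} (h1 : a ≠ ⊥) (h2 : a ≠ ⊤) : ∃ r : ℝ, a = (r : EReal) := by
  induction a with
  | bot => exact absurd rfl h1
  | coe v => exact ⟨v, rfl⟩
  | top => exact absurd rfl h2

lemma sep_point_epi {h : X → EReal} (hconv : Convex ℝ (epiFn h)) (hlsc : LowerSemicontinuous h)
    (hne : (epiFn h).Nonempty) {x₀ : X} {c : ℝ} (hout : (x₀, c) ∉ epiFn h) :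
    ∃ (ℓ : X →L[ℝ] ℝ) (α u : ℝ), 0 ≤ α ∧ ℓ x₀ + α * c < u ∧
      ∀ z ∈ epiFn h, u < ℓ z.1 + α * z.2 := by
  obtain ⟨F, u, hFu, hF⟩ := geometric_hahn_banach_point_closed hconv (isClosed_epiFn hlsc) hout
  set α := F ((0 : X), (1 : ℝ)) with hαdef
  set ℓ := F.comp (ContinuousLinearMap.inl ℝ X ℝ) with hℓdef
  have hdecomp : ∀ z : X × ℝ, F z = ℓ z.1 + α * z.2 := by
    intro z
    have hz : z = (z.1, (0:ℝ)) + z.2 • ((0:X), (1:ℝ)) := by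
      simp [Prod.ext_iff]
    have h2 : F z = F (z.1, (0:ℝ)) + z.2 * F ((0:X), (1:ℝ)) := by
      conv_lhs => rw [hz]
      rw [map_add, map_smul, smul_eq_mul]
    rw [h2]
    have h3 : F (z.1, (0:ℝ)) = ℓ z.1 := rfl
    rw [h3]; ring
  obtain ⟨z₁, hz₁⟩ := hne
  have hup : ∀ n : ℕ, u < ℓ z₁.1 + α * (z₁.2 + n) := by
    intro n
    have hmem : (z₁.1, z₁.2 + (n:ℝ)) ∈ epiFn h := by
      simp only [epiFn, Set.mem_setOf_eq] at hz₁ ⊢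
      exact le_trans hz₁ (by exact_mod_cast le_add_of_nonneg_right (Nat.cast_nonneg n))
    have := hF _ hmem
    rw [hdecomp] at this
    exact this
  have hα : 0 ≤ α := by
    by_contra hneg
    push_neg at hneg
    obtain ⟨n, hn⟩ := exists_nat_gt ((ℓ z₁.1 + α * z₁.2 - u) / (-α))
    rw [div_lt_iff₀ (by linarith)] at hn
    have := hup n
    nlinarith
  refine ⟨ℓ, α, u, hα, ?_, fun z hz => by rw [← hdecomp]; exact hF z hz⟩
  have := hFu
  rw [hdecomp (x₀, c)] at this
  exact this

lemma exists_minorant {h : X → EReal} (hprop : ∀ x, h x ≠ ⊥) (hdom : ∃ x, h x ≠ ⊤)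
    (hconv : Convex ℝ (epiFn h)) (hlsc : LowerSemicontinuous h) :
    ∃ (p : WeakDual ℝ X) (r : ℝ), (p, r) ∈ epiFn (conjFn h) := by
  obtain ⟨x₁, hx₁⟩ := hdom
  obtain ⟨r₁, hr₁⟩ := EReal.exists_coe' (hprop x₁) hx₁
  have hne : (epiFn h).Nonempty := ⟨(x₁, r₁), by simp [epiFn, hr₁]⟩
  have hout : (x₁, r₁ - 1) ∉ epiFn h := by
    simp only [epiFn, Set.mem_setOf_eq, hr₁, EReal.coe_le_coe_iff]
    linarith
  obtain ⟨ℓ, α, u, hα, hlt, hgt⟩ := sep_point_epi hconv hlsc hne hout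
  have hαpos : 0 < α := by
    rcases eq_or_lt_of_le hα with hα0 | hαpos
    · exfalso
      have h1 := hgt (x₁, r₁) (by simp [epiFn, hr₁])
      rw [← hα0] at hlt h1
      simp only [zero_mul, add_zero] at hlt h1
      linarith
    · exact hαpos
  refine ⟨((-α⁻¹) • ℓ : X →L[ℝ] ℝ), -(u / α), ?_⟩
  apply mem_epi_conj_iff.2
  intro x
  rcases eq_or_ne (h x) ⊤ with htop | hne'
  · rw [htop]; exact le_top
  obtain ⟨v, hv⟩ := EReal.exists_coe' (hprop x) hne'
  have h1 := hgt (x, v) (by simp [epiFn, hv])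
  simp only at h1
  rw [hv, EReal.coe_le_coe_iff]
  show -α⁻¹ * ℓ x - -(u / α) ≤ v
  have heq : -α⁻¹ * ℓ x - -(u / α) = (u - ℓ x) / α := by
    field_simp; ring
  rw [heq, div_le_iff₀ hαpos]
  nlinarith [h1]

lemma exists_minorant_lt {h : X → EReal} (hprop : ∀ x, h x ≠ ⊥) (hdom : ∃ x, h x ≠ ⊤)
    (hconv : Convex ℝ (epiFn h)) (hlsc : LowerSemicontinuous h)
    {x₀ : X} {c : ℝ} (hc : (c : EReal) < h x₀) :
    ∃ (p : WeakDual ℝ X) (r : ℝ), (p, r) ∈ epiFn (conjFn h) ∧ c < p x₀ - r := by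
  have hne : (epiFn h).Nonempty := by
    obtain ⟨x₁, hx₁⟩ := hdom
    obtain ⟨r₁, hr₁⟩ := EReal.exists_coe' (hprop x₁) hx₁
    exact ⟨(x₁, r₁), by simp [epiFn, hr₁]⟩
  have hout : (x₀, c) ∉ epiFn h := by
    simp only [epiFn, Set.mem_setOf_eq, not_le]
    exact hc
  obtain ⟨ℓ, α, u, hα, hlt, hgt⟩ := sep_point_epi hconv hlsc hne hout
  rcases eq_or_lt_of_le hα with hα0 | hαpos
  · -- α = 0
    obtain ⟨p₀, r₀, hp₀⟩ := exists_minorant hprop hdom hconv hlsc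
    rw [← hα0] at hlt hgt
    simp only [zero_mul, add_zero] at hlt hgt
    have hpos : 0 < u - ℓ x₀ := by linarith
    set ℓw : WeakDual ℝ X := ℓ with hℓw
    set t := max 0 ((c - (p₀ x₀ - r₀) + 1) / (u - ℓ x₀)) with htdef
    have ht0 : 0 ≤ t := le_max_left _ _
    refine ⟨p₀ - t • ℓw, r₀ - t * u, ?_, ?_⟩
    · rw [mem_epi_conj_iff]
      intro x
      rcases eq_or_ne (h x) ⊤ with htop | hne'
      · rw [htop]; exact le_top
      obtain ⟨v, hv⟩ := EReal.exists_coe' (hprop x) hne'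
      have h1 : u < ℓ x := hgt (x, v) (by simp [epiFn, hv])
      have h2 : p₀ x - r₀ ≤ v := by
        have := (mem_epi_conj_iff.1 hp₀) x
        rw [hv, EReal.coe_le_coe_iff] at this
        exact this
      rw [hv, EReal.coe_le_coe_iff]
      show p₀ x - t * ℓ x - (r₀ - t * u) ≤ v
      nlinarith
    · show c < p₀ x₀ - t * ℓ x₀ - (r₀ - t * u)
      have hge : (c - (p₀ x₀ - r₀) + 1) / (u - ℓ x₀) ≤ t := le_max_right _ _
      rw [div_le_iff₀ hpos] at hge
      nlinarith
  · -- α > 0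
    refine ⟨((-α⁻¹) • ℓ : X →L[ℝ] ℝ), -(u / α), ?_, ?_⟩
    · apply mem_epi_conj_iff.2
      intro x
      rcases eq_or_ne (h x) ⊤ with htop | hne'
      · rw [htop]; exact le_top
      obtain ⟨v, hv⟩ := EReal.exists_coe' (hprop x) hne'
      have h1 := hgt (x, v) (by simp [epiFn, hv])
      simp only at h1
      rw [hv, EReal.coe_le_coe_iff]
      show -α⁻¹ * ℓ x - -(u / α) ≤ v
      have heq : -α⁻¹ * ℓ x - -(u / α) = (u - ℓ x) / α := by
        field_simp; ring
      rw [heq, div_le_iff₀ hαpos]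
      nlinarith [h1]
    · show c < -α⁻¹ * ℓ x₀ - -(u / α)
      have heq : -α⁻¹ * ℓ x₀ - -(u / α) = (u - ℓ x₀) / α := by
        field_simp; ring
      rw [heq, lt_div_iff₀ hαpos]
      nlinarith [hlt]

lemma le_zero_of_forall_minor {h : X → EReal} (hprop : ∀ x, h x ≠ ⊥) (hdom : ∃ x, h x ≠ ⊤)
    (hconv : Convex ℝ (epiFn h)) (hlsc : LowerSemicontinuous h) {u : X}
    (hu : ∀ (p : WeakDual ℝ X) (r : ℝ), (p, r) ∈ epiFn (conjFn h) → p u ≤ r) :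
    h u ≤ (0 : EReal) := by
  by_contra hlt
  push_neg at hlt
  have h0 : ((0:ℝ) : EReal) < h u := by exact_mod_cast hlt
  obtain ⟨p, r, hpr, hcc⟩ := exists_minorant_lt hprop hdom hconv hlsc h0
  have := hu p r hpr
  linarith

end Separation

lemma mem_epi_conj_indicator_iff {D : Set X} {p : WeakDual ℝ X} {r : ℝ} :
    (p, r) ∈ epiFn (conjFn (indicatorE D)) ↔ ∀ x ∈ D, p x ≤ r := by
  rw [mem_epi_conj_iff]
  constructor
  · intro hx x hxD
    have h1 := hx x
    rw [indicatorE, if_pos hxD, show (0 : EReal) = ((0:ℝ) : EReal) from rfl,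
      EReal.coe_le_coe_iff] at h1
    linarith
  · intro hx x
    by_cases hxD : x ∈ D
    · rw [indicatorE, if_pos hxD, show (0 : EReal) = ((0:ℝ) : EReal) from rfl,
        EReal.coe_le_coe_iff]
      linarith [hx x hxD]
    · rw [indicatorE, if_neg hxD]; exact le_top

lemma mem_epi_conj_indicator_iff' {D : Set X} {q : WeakDual ℝ X × ℝ} :
    q ∈ epiFn (conjFn (indicatorE D)) ↔ ∀ x ∈ D, q.1 x ≤ q.2 := by
  rw [show q = (q.1, q.2) from rfl]
  exact mem_epi_conj_indicator_iff

lemma indicatorE_ne_bot (D : Set X) (x : X) : indicatorE D x ≠ ⊥ := by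
  rw [indicatorE]; split_ifs <;> simp

lemma indicatorE_dom {D : Set X} {x : X} (hx : x ∈ D) : indicatorE D x ≠ ⊤ := by
  rw [indicatorE, if_pos hx]; simp

lemma epiFn_indicator_eq {D : Set X} : epiFn (indicatorE D) = D ×ˢ Set.Ici (0:ℝ) := by
  ext ⟨x, t⟩
  simp only [epiFn, Set.mem_setOf_eq, Set.mem_prod, Set.mem_Ici, indicatorE]
  split_ifs with hx
  · rw [show (0 : EReal) = ((0:ℝ) : EReal) from rfl, EReal.coe_le_coe_iff]
    exact ⟨fun h => ⟨hx, h⟩, fun h => h.2⟩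
  · simp only [top_le_iff, EReal.coe_ne_top]
    exact ⟨fun h => absurd h (by simp), fun h => absurd h.1 hx⟩

lemma convex_epi_indicator {D : Set X} (hD : Convex ℝ D) : Convex ℝ (epiFn (indicatorE D)) := by
  rw [epiFn_indicator_eq]; exact hD.prod (convex_Ici 0)

lemma lsc_indicator {D : Set X} (hD : IsClosed D) : LowerSemicontinuous (indicatorE D) := by
  intro x y hy
  by_cases hx : x ∈ D
  · rw [indicatorE, if_pos hx] at hy
    filter_upwards with z
    calc y < 0 := hy
    _ ≤ indicatorE D z := by rw [indicatorE]; split_ifs <;> simp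
  · rw [indicatorE, if_neg hx] at hy
    filter_upwards [hD.isOpen_compl.mem_nhds hx] with z hz
    rw [indicatorE, if_neg hz]
    exact hy

lemma mem_solSet_C {I : Type*} {C : Set X} {f : I → X → EReal} {x : X}
    (hx : x ∈ solSet C f) : x ∈ C := hx.1

section Farkas
variable [IsTopologicalAddGroup X] [ContinuousSMul ℝ X] [LocallyConvexSpace ℝ X]

lemma sep_point_closed_dual {K : Set (WeakDual ℝ X × ℝ)} (hK : Convex ℝ K) (hcl : IsClosed K)
    {q : WeakDual ℝ X × ℝ} (hq : q ∉ K) :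
    ∃ (x₀ : X) (α u : ℝ), (∀ z ∈ K, z.1 x₀ + α * z.2 < u) ∧ u < q.1 x₀ + α * q.2 := by
  obtain ⟨F, u, hFlt, hFq⟩ := geometric_hahn_banach_closed_point hK hcl hq
  set α := F ((0 : WeakDual ℝ X), (1 : ℝ)) with hαdef
  set G := F.comp (ContinuousLinearMap.inl ℝ (WeakDual ℝ X) ℝ) with hGdef
  obtain ⟨x₀, hx₀⟩ := weakdual_exists_eval G
  have hdecomp : ∀ z : WeakDual ℝ X × ℝ, F z = z.1 x₀ + α * z.2 := by
    intro z
    have hz : z = (z.1, (0:ℝ)) + z.2 • ((0 : WeakDual ℝ X), (1:ℝ)) := by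
      simp [Prod.ext_iff]
    have h2 : F z = F (z.1, (0:ℝ)) + z.2 * F ((0 : WeakDual ℝ X), (1:ℝ)) := by
      conv_lhs => rw [hz]
      rw [map_add, map_smul, smul_eq_mul]
    rw [h2]
    have h3 : F (z.1, (0:ℝ)) = G z.1 := rfl
    rw [h3, hx₀ z.1]; ring
  exact ⟨x₀, α, u, fun z hz => by rw [← hdecomp]; exact hFlt z hz,
    by rw [← hdecomp]; exact hFq⟩

lemma charCone_eq {I : Type*} {C : Set X} (hCne : C.Nonempty) (hCcl : IsClosed C)
    (hCcv : Convex ℝ C) {f : I → X → EReal} (hf : ∀ i, InGamma (f i))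
    (hAne : (solSet C f).Nonempty) (hKcl : IsClosed (charCone C f)) :
    charCone C f = epiFn (conjFn (indicatorE (solSet C f))) := by
  set A := solSet C f with hAdef
  have hAC : A ⊆ C := fun x hx => hx.1
  -- the generating set is contained in epi δ_A*
  have hgen : (epiFn (conjFn (indicatorE C)) ∪ ⋃ i, epiFn (conjFn (f i)))
      ⊆ epiFn (conjFn (indicatorE A)) := by
    rintro z (hz | hz)
    · rw [mem_epi_conj_indicator_iff'] at hz ⊢
      exact fun x hx => hz x (hAC hx)
    · rw [Set.mem_iUnion] at hz
      obtain ⟨i, hz⟩ := hz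
      rw [mem_epi_conj_indicator_iff']
      intro x hx
      have h1 := (mem_epi_conj_iff.1 (by rw [show z = (z.1, z.2) from rfl] at hz; exact hz)) x
      have h2 : f i x ≤ ((0:ℝ) : EReal) := hx.2 i
      have := le_trans h1 h2
      rw [EReal.coe_le_coe_iff] at this
      linarith
  have hPconv : Convex ℝ (epiFn (conjFn (indicatorE A))) := by
    intro z hz w hw a b ha hb hab
    rw [mem_epi_conj_indicator_iff'] at hz hw ⊢
    intro x hx
    have : (a • z + b • w).1 x = a * z.1 x + b * w.1 x := rfl
    rw [this]
    have : (a • z + b • w).2 = a * z.2 + b * w.2 := rfl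
    rw [this]
    exact add_le_add (mul_le_mul_of_nonneg_left (hz x hx) ha)
      (mul_le_mul_of_nonneg_left (hw x hx) hb)
  have hPsmul : ∀ t : ℝ, 0 ≤ t → ∀ z ∈ epiFn (conjFn (indicatorE A)), t • z ∈
      epiFn (conjFn (indicatorE A)) := by
    intro t ht z hz
    rw [mem_epi_conj_indicator_iff'] at hz ⊢
    intro x hx
    have h1 : (t • z).1 x = t * z.1 x := rfl
    have h2 : (t • z).2 = t * z.2 := rfl
    rw [h1, h2]
    exact mul_le_mul_of_nonneg_left (hz x hx) ht
  have hP0 : (0 : WeakDual ℝ X × ℝ) ∈ epiFn (conjFn (indicatorE A)) := by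
    rw [mem_epi_conj_indicator_iff']
    intro x _
    show (0:ℝ) ≤ (0:ℝ)
    exact le_refl _
  apply Set.Subset.antisymm
  · exact coneGen_subset hgen hPconv hP0 hPsmul
  -- hard direction
  intro q hq
  by_contra hqK
  obtain ⟨x₀, α, u, hsep, hqgt⟩ := sep_point_closed_dual (coneGen_convex _) hKcl hqK
  have h0K : (0 : WeakDual ℝ X × ℝ) ∈ charCone C f := zero_mem_coneGen _
  have hu0 : 0 < u := by
    have h00 := hsep 0 h0K
    have : (0 : WeakDual ℝ X × ℝ).1 x₀ + α * (0 : WeakDual ℝ X × ℝ).2 = 0 := by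
      show (0:ℝ) + α * 0 = 0; ring
    rwa [this] at h00
  have hle : ∀ z ∈ charCone C f, z.1 x₀ + α * z.2 ≤ 0 := by
    intro z hz
    by_contra hpos
    push_neg at hpos
    have hmem : (u / (z.1 x₀ + α * z.2)) • z ∈ charCone C f :=
      coneGen_smul_mem (le_of_lt (div_pos hu0 hpos)) hz
    have := hsep _ hmem
    have h1 : ((u / (z.1 x₀ + α * z.2)) • z).1 x₀ = (u / (z.1 x₀ + α * z.2)) * z.1 x₀ := rfl
    have h2 : ((u / (z.1 x₀ + α * z.2)) • z).2 = (u / (z.1 x₀ + α * z.2)) * z.2 := rfl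
    rw [h1, h2] at this
    rw [show u / (z.1 x₀ + α * z.2) * z.1 x₀ + α * (u / (z.1 x₀ + α * z.2) * z.2)
      = (z.1 x₀ + α * z.2) * (u / (z.1 x₀ + α * z.2)) by ring,
      mul_div_cancel₀ _ (ne_of_gt hpos)] at this
    exact lt_irrefl u this
  have hCsub : epiFn (conjFn (indicatorE C)) ⊆ charCone C f :=
    fun z hz => subset_coneGen _ (Or.inl hz)
  have hfsub : ∀ i, epiFn (conjFn (f i)) ⊆ charCone C f :=
    fun i z hz => subset_coneGen _ (Or.inr (Set.mem_iUnion.2 ⟨i, hz⟩))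
  have hα : α ≤ 0 := by
    have h01 : ((0 : WeakDual ℝ X), (1:ℝ)) ∈ epiFn (conjFn (indicatorE C)) := by
      rw [mem_epi_conj_indicator_iff]
      intro x _
      show (0:ℝ) ≤ (1:ℝ)
      exact zero_le_one
    have h02 := hle _ (hCsub h01)
    have : ((0 : WeakDual ℝ X), (1:ℝ)).1 x₀ + α * ((0 : WeakDual ℝ X), (1:ℝ)).2 = α := by
      show (0:ℝ) + α * 1 = α; ring
    rwa [this] at h02
  rcases eq_or_lt_of_le hα with hα0 | hαneg
  · -- α = 0
    rw [hα0] at hqgt hle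
    simp only [zero_mul, add_zero] at hqgt hle
    obtain ⟨a, ha⟩ := hAne
    have hstep : ∀ t : ℝ, 0 ≤ t → a + t • x₀ ∈ A := by
      intro t ht
      constructor
      · -- in C
        have := le_zero_of_forall_minor (indicatorE_ne_bot C) ⟨hCne.choose, indicatorE_dom hCne.choose_spec⟩
          (convex_epi_indicator hCcv) (lsc_indicator hCcl) (u := a + t • x₀) ?_
        · by_contra hnC
          rw [indicatorE, if_neg hnC] at this
          exact absurd this (by simp)
        · intro p r hpr
          have hpa : p a ≤ r := mem_epi_conj_indicator_iff.1 hpr a (hAC ha)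
          have hpx : p x₀ ≤ 0 := hle _ (hCsub hpr)
          have : p (a + t • x₀) = p a + t * p x₀ := by
            rw [map_add, map_smul]; rfl
          rw [this]
          nlinarith
      · intro i
        apply le_zero_of_forall_minor (hf i).1 (hf i).2.1 (hf i).2.2.1 (hf i).2.2.2
        intro p r hpr
        have hpa : p a ≤ r := by
          have h1 := (mem_epi_conj_iff.1 hpr) a
          have h2 : f i a ≤ ((0:ℝ) : EReal) := ha.2 i
          have := le_trans h1 h2
          rw [EReal.coe_le_coe_iff] at this
          linarith
        have hpx : p x₀ ≤ 0 := hle _ (hfsub i hpr)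
        have : p (a + t • x₀) = p a + t * p x₀ := by
          rw [map_add, map_smul]; rfl
        rw [this]
        nlinarith
    have hq1pos : 0 < q.1 x₀ := lt_trans hu0 hqgt
    set t := max 0 ((q.2 - q.1 a + 1) / (q.1 x₀)) with htdef
    have ht0 : 0 ≤ t := le_max_left _ _
    have hmem := hstep t ht0
    have hqa : q.1 (a + t • x₀) ≤ q.2 := mem_epi_conj_indicator_iff'.1 hq _ hmem
    have heval : q.1 (a + t • x₀) = q.1 a + t * q.1 x₀ := by
      rw [map_add, map_smul]; rfl
    rw [heval] at hqa
    have hge : (q.2 - q.1 a + 1) / (q.1 x₀) ≤ t := le_max_right _ _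
    rw [div_le_iff₀ hq1pos] at hge
    linarith
  · -- α < 0
    set y := (-α)⁻¹ • x₀ with hydef
    have hnegpos : 0 < -α := by linarith
    have hinvpos : 0 < (-α)⁻¹ := inv_pos.2 hnegpos
    have hyA : y ∈ A := by
      constructor
      · have := le_zero_of_forall_minor (indicatorE_ne_bot C)
          ⟨hCne.choose, indicatorE_dom hCne.choose_spec⟩
          (convex_epi_indicator hCcv) (lsc_indicator hCcl) (u := y) ?_
        · by_contra hnC
          rw [indicatorE, if_neg hnC] at this
          exact absurd this (by simp)
        · intro p r hpr
          have h1 : p x₀ + α * r ≤ 0 := hle _ (hCsub hpr)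
          have h2 : p y = (-α)⁻¹ * p x₀ := by rw [map_smul]; rfl
          rw [h2]
          rw [show (-α)⁻¹ * p x₀ ≤ r ↔ (-α)⁻¹ * p x₀ ≤ r from Iff.rfl]
          have h3 : p x₀ ≤ (-α) * r := by linarith
          calc (-α)⁻¹ * p x₀ ≤ (-α)⁻¹ * ((-α) * r) :=
            mul_le_mul_of_nonneg_left h3 (le_of_lt hinvpos)
          _ = r := by rw [← mul_assoc, inv_mul_cancel₀ (ne_of_gt hnegpos), one_mul]
      · intro i
        apply le_zero_of_forall_minor (hf i).1 (hf i).2.1 (hf i).2.2.1 (hf i).2.2.2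
        intro p r hpr
        have h1 : p x₀ + α * r ≤ 0 := hle _ (hfsub i hpr)
        have h2 : p y = (-α)⁻¹ * p x₀ := by rw [map_smul]; rfl
        rw [h2]
        have h3 : p x₀ ≤ (-α) * r := by linarith
        calc (-α)⁻¹ * p x₀ ≤ (-α)⁻¹ * ((-α) * r) :=
          mul_le_mul_of_nonneg_left h3 (le_of_lt hinvpos)
        _ = r := by rw [← mul_assoc, inv_mul_cancel₀ (ne_of_gt hnegpos), one_mul]
    have hqy : q.1 y ≤ q.2 := mem_epi_conj_indicator_iff'.1 hq _ hyA
    have h2 : q.1 y = (-α)⁻¹ * q.1 x₀ := by rw [map_smul]; rfl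
    have h3 : -α * q.2 < q.1 x₀ := by linarith
    have h4 : q.2 < (-α)⁻¹ * q.1 x₀ := by
      have := mul_lt_mul_of_pos_left h3 hinvpos
      rw [show (-α)⁻¹ * (-α * q.2) = q.2 by
        rw [← mul_assoc, inv_mul_cancel₀ (ne_of_gt hnegpos), one_mul]] at this
      exact this
    rw [h2] at hqy
    linarith

end Farkas

section SumRule
variable [IsTopologicalAddGroup X] [ContinuousSMul ℝ X] [LocallyConvexSpace ℝ X]

lemma mem_epi_conj_add_indicator_iff {g : X → EReal} (hgprop : ∀ x, g x ≠ ⊥) {A : Set X}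
    {p : WeakDual ℝ X} {r : ℝ} :
    (p, r) ∈ epiFn (conjFn (fun x => g x + indicatorE A x)) ↔
      ∀ x ∈ A, ((p x - r : ℝ) : EReal) ≤ g x := by
  rw [mem_epi_conj_iff]
  constructor
  · intro hx x hxA
    have := hx x
    rwa [indicatorE, if_pos hxA, add_zero] at this
  · intro hx x
    by_cases hxA : x ∈ A
    · rw [indicatorE, if_pos hxA, add_zero]
      exact hx x hxA
    · rw [indicatorE, if_neg hxA, EReal.add_top_of_ne_bot (hgprop x)]
      exact le_top

set_option maxHeartbeats 1000000 in
lemma epi_conj_sum_eq {g : X → EReal} (hgprop : ∀ x, g x ≠ ⊥)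
    (hgconv : Convex ℝ (epiFn g)) {A : Set X} (hA : Convex ℝ A)
    {a : X} (haA : a ∈ A) {ra : ℝ} (hga : g a = (ra : EReal)) (hcont : ContinuousAt g a) :
    epiFn (conjFn g) + epiFn (conjFn (indicatorE A)) =
      epiFn (conjFn (fun x => g x + indicatorE A x)) := by
  apply Set.Subset.antisymm
  · -- easy inclusion
    rintro w ⟨z₁, hz₁, z₂, hz₂, rfl⟩
    have h1 : ∀ x, ((z₁.1 x - z₁.2 : ℝ) : EReal) ≤ g x := by
      intro x
      exact (mem_epi_conj_iff.1 (by rw [show z₁ = (z₁.1, z₁.2) from rfl] at hz₁; exact hz₁)) x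
    have h2 : ∀ x ∈ A, z₂.1 x ≤ z₂.2 :=
      mem_epi_conj_indicator_iff'.1 hz₂
    show (z₁.1 + z₂.1, z₁.2 + z₂.2) ∈ epiFn (conjFn (fun x => g x + indicatorE A x))
    rw [mem_epi_conj_add_indicator_iff hgprop]
    intro x hxA
    rcases eq_or_ne (g x) ⊤ with htop | hne'
    · rw [htop]; exact le_top
    obtain ⟨v, hv⟩ := EReal.exists_coe' (hgprop x) hne'
    have h1' : z₁.1 x - z₁.2 ≤ v := by
      have := h1 x; rwa [hv, EReal.coe_le_coe_iff] at this
    rw [hv, EReal.coe_le_coe_iff]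
    have heval : (z₁.1 + z₂.1) x = z₁.1 x + z₂.1 x := rfl
    rw [heval]
    linarith [h2 x hxA]
  -- hard inclusion
  intro z hz
  set pp := z.1 with hppdef
  set rr := z.2 with hrrdef
  have hchar : ∀ x ∈ A, ((pp x - rr : ℝ) : EReal) ≤ g x := by
    rw [show z = (z.1, z.2) from rfl] at hz
    exact (mem_epi_conj_add_indicator_iff hgprop).1 hz
  set φ : X → EReal := fun x => g x + ((-(pp x) : ℝ) : EReal) with hφdef
  have hφepi : ∀ (x : X) (t : ℝ), ((x, t) ∈ epiFn φ ↔ (x, t + pp x) ∈ epiFn g) := by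
    intro x t
    simp only [epiFn, Set.mem_setOf_eq, hφdef]
    rcases eq_or_ne (g x) ⊤ with htop | hne'
    · rw [htop, EReal.top_add_of_ne_bot (by simp)]
      simp only [top_le_iff]
      exact ⟨fun hh => absurd hh (EReal.coe_ne_top t), fun hh => absurd hh (EReal.coe_ne_top _)⟩
    obtain ⟨v, hv⟩ := EReal.exists_coe' (hgprop x) hne'
    rw [hv, show ((v : EReal) + ((-(pp x) : ℝ) : EReal)) = ((v - pp x : ℝ) : EReal) by
      rw [EReal.coe_sub, EReal.coe_neg, sub_eq_add_neg], EReal.coe_le_coe_iff,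
      EReal.coe_le_coe_iff]
    constructor <;> intro <;> linarith
  have hφconv : Convex ℝ (epiFn φ) := by
    rintro ⟨x, t⟩ hx ⟨y, s⟩ hy c d hc hd hcd
    rw [hφepi] at hx hy
    rw [show c • ((x : X), t) + d • (y, s) = (c • x + d • y, c * t + d * s) from rfl, hφepi]
    have := hgconv hx hy hc hd hcd
    rw [show c • ((x : X), t + pp x) + d • (y, s + pp y)
      = (c • x + d • y, c * (t + pp x) + d * (s + pp y)) from rfl] at this
    have heval : pp (c • x + d • y) = c * pp x + d * pp y := by
      rw [map_add, map_smul, map_smul]; rfl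
    rw [show c * t + d * s + pp (c • x + d • y)
      = c * (t + pp x) + d * (s + pp y) by rw [heval]; ring]
    exact this
  -- interior point of epi φ
  have hppc : Continuous fun x : X => pp x := map_continuous (pp : X →L[ℝ] ℝ)
  have hU₀ : g ⁻¹' (Set.Iio ((ra + 1 : ℝ) : EReal)) ∈ 𝓝 a := by
    apply hcont.preimage_mem_nhds
    apply isOpen_Iio.mem_nhds
    rw [hga]
    simp only [Set.mem_Iio]
    exact_mod_cast (by linarith : ra < ra + 1)
  have hU₁ : {x : X | |pp x - pp a| < 1} ∈ 𝓝 a := by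
    have : IsOpen {x : X | |pp x - pp a| < 1} :=
      isOpen_lt (by continuity) continuous_const
    exact this.mem_nhds (by simp)
  set W := interior (g ⁻¹' (Set.Iio ((ra + 1 : ℝ) : EReal)) ∩ {x : X | |pp x - pp a| < 1}) with hWdef
  have haW : a ∈ W := mem_interior_iff_mem_nhds.2 (Filter.inter_mem hU₀ hU₁)
  set M := ra + 2 - pp a with hMdef
  have hbox : W ×ˢ Set.Ioi M ⊆ epiFn φ := by
    rintro ⟨x, t⟩ ⟨hxW, hxt⟩
    have hx' := interior_subset hxW
    have hg1 : g x < ((ra + 1 : ℝ) : EReal) := hx'.1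
    have hp1 : |pp x - pp a| < 1 := hx'.2
    have hne' : g x ≠ ⊤ := ne_top_of_lt hg1
    obtain ⟨v, hv⟩ := EReal.exists_coe' (hgprop x) hne'
    rw [hφepi]
    simp only [epiFn, Set.mem_setOf_eq]
    rw [hv, EReal.coe_le_coe_iff]
    rw [hv, EReal.coe_lt_coe_iff] at hg1
    have := abs_lt.1 hp1
    have ht : M < t := hxt
    rw [hMdef] at ht
    linarith
  have hboxint : W ×ˢ Set.Ioi M ⊆ interior (epiFn φ) :=
    interior_maximal hbox ((isOpen_interior).prod isOpen_Ioi)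
  have hy₀ : ((a : X), M + 1) ∈ interior (epiFn φ) :=
    hboxint ⟨haW, by simp [Set.mem_Ioi]⟩
  -- B₂
  set B₂ := A ×ˢ Set.Iio (-rr) with hB₂def
  have hB₂conv : Convex ℝ B₂ := hA.prod (convex_Iio _)
  have hdisj : Disjoint (interior (epiFn φ)) B₂ := by
    rw [Set.disjoint_left]
    rintro ⟨x, t⟩ hint ⟨hxA, ht⟩
    have hepi := interior_subset hint
    have h1 := hchar x hxA
    rcases eq_or_ne (g x) ⊤ with htop | hne'
    · rw [hφepi] at hepi
      simp only [epiFn, Set.mem_setOf_eq, htop] at hepi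
      exact (EReal.coe_ne_top _) (top_le_iff.1 hepi)
    obtain ⟨v, hv⟩ := EReal.exists_coe' (hgprop x) hne'
    rw [hv, EReal.coe_le_coe_iff] at h1
    rw [hφepi] at hepi
    simp only [epiFn, Set.mem_setOf_eq, hv, EReal.coe_le_coe_iff] at hepi
    have ht' : t < -rr := ht
    linarith
  obtain ⟨F, u, hFlt, hFge⟩ := geometric_hahn_banach_open (hφconv.interior) isOpen_interior
    hB₂conv hdisj
  -- F ≤ u on epi φ
  have hFepi : ∀ w ∈ epiFn φ, F w ≤ u := by
    intro w hw
    by_contra hgt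
    push_neg at hgt
    set d := F w - u with hddef
    have hd : 0 < d := by linarith
    set y₀ := ((a : X), M + 1) with hy₀def
    set D := |F y₀ - F w| with hDdef
    have hD0 : 0 < D + 1 := by positivity
    set t := min 1 (d / (D + 1)) with htdef
    have ht0 : 0 < t := lt_min one_pos (div_pos hd hD0)
    have ht1 : t ≤ 1 := min_le_left _ _
    have hmem : t • y₀ + (1 - t) • w ∈ interior (epiFn φ) :=
      hφconv.combo_interior_self_mem_interior hy₀ hw ht0 (by linarith) (by ring)
    have hval := hFlt _ hmem
    rw [map_add, map_smul, map_smul, smul_eq_mul, smul_eq_mul] at hval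
    have h5 : t * (D + 1) ≤ d := by
      rw [← le_div_iff₀ hD0]
      exact min_le_right _ _
    have h6 : -(D) ≤ F y₀ - F w := neg_abs_le _
    nlinarith [mul_le_mul_of_nonneg_left h6 ht0.le]
  -- decompose F
  set α := F ((0 : X), (1 : ℝ)) with hαdef
  set ℓ := F.comp (ContinuousLinearMap.inl ℝ X ℝ) with hℓdef
  have hdecomp : ∀ w : X × ℝ, F w = ℓ w.1 + α * w.2 := by
    intro w
    have hw : w = (w.1, (0:ℝ)) + w.2 • ((0:X), (1:ℝ)) := by simp [Prod.ext_iff]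
    have h2 : F w = F (w.1, (0:ℝ)) + w.2 * F ((0:X), (1:ℝ)) := by
      conv_lhs => rw [hw]
      rw [map_add, map_smul, smul_eq_mul]
    rw [h2]
    have h3 : F (w.1, (0:ℝ)) = ℓ w.1 := rfl
    rw [h3]; ring
  -- α < 0
  have hαneg : α < 0 := by
    have hup : ∀ n : ℕ, ℓ a + α * (M + 1 + n) < u := by
      intro n
      have hmem : ((a:X), M + 1 + (n:ℝ)) ∈ interior (epiFn φ) :=
        hboxint ⟨haW, by
          simp only [Set.mem_Ioi]
          have := Nat.cast_nonneg (α := ℝ) n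
          linarith⟩
      have := hFlt _ hmem
      rwa [hdecomp] at this
    have hα : α ≤ 0 := by
      by_contra hpos
      push_neg at hpos
      obtain ⟨n, hn⟩ := exists_nat_gt ((u - ℓ a - α * (M + 1)) / α)
      rw [div_lt_iff₀ hpos] at hn
      have := hup n
      nlinarith
    rcases eq_or_lt_of_le hα with hα0 | hαneg
    · exfalso
      have h1 := hFlt _ hy₀
      have h2 := hFge ((a : X), -rr - 1) ⟨haA, by simp only [Set.mem_Iio]; linarith⟩
      rw [hdecomp] at h1 h2
      simp only at h1 h2
      rw [hα0] at h1 h2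
      simp only [zero_mul, add_zero] at h1 h2
      linarith
    · exact hαneg
  set β := -α with hβdef
  have hβ : 0 < β := by rw [hβdef]; linarith
  set ℓw : WeakDual ℝ X := ℓ with hℓw
  set p₁ := pp + β⁻¹ • ℓw with hp₁def
  set r₁ := u / β with hr₁def
  set p₂ := (-β⁻¹) • ℓw with hp₂def
  set r₂ := rr - u / β with hr₂def
  have hmem₁ : (p₁, r₁) ∈ epiFn (conjFn g) := by
    rw [mem_epi_conj_iff]
    intro x
    rcases eq_or_ne (g x) ⊤ with htop | hne'
    · rw [htop]; exact le_top
    obtain ⟨v, hv⟩ := EReal.exists_coe' (hgprop x) hne'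
    have hepi : ((x : X), v - pp x) ∈ epiFn φ := by
      rw [hφepi]
      simp only [epiFn, Set.mem_setOf_eq, hv]
      rw [show v - pp x + pp x = v by ring]
    have h0 := hFepi _ hepi
    rw [hdecomp] at h0
    have h1 : ℓ x + α * (v - pp x) ≤ u := h0
    rw [hv, EReal.coe_le_coe_iff]
    show pp x + β⁻¹ * ℓ x - u / β ≤ v
    have heq : pp x + β⁻¹ * ℓ x - u / β = (β * pp x + ℓ x - u) / β := by
      field_simp
    rw [heq, div_le_iff₀ hβ]
    have hαβ : α = -β := by rw [hβdef]; ring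
    rw [hαβ] at h1
    nlinarith
  have hmem₂ : (p₂, r₂) ∈ epiFn (conjFn (indicatorE A)) := by
    rw [mem_epi_conj_indicator_iff]
    intro x hxA
    show -β⁻¹ * ℓw x ≤ rr - u / β
    have hkey : u ≤ ℓw x + β * rr := by
      apply le_of_forall_pos_le_add
      intro ε hε
      have hs : -rr - ε / β < -rr := by
        have : 0 < ε / β := div_pos hε hβ
        linarith
      have h2 := hFge ((x : X), -rr - ε / β) ⟨hxA, hs⟩
      rw [hdecomp] at h2
      simp only at h2
      have hαβ : α = -β := by rw [hβdef]; ring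
      rw [hαβ] at h2
      have h3 : -β * (-rr - ε / β) = β * rr + ε := by
        field_simp
        ring
      rw [h3] at h2
      rw [← add_assoc] at h2; exact h2
    have heq : rr - u / β - (-β⁻¹ * ℓw x) = (β * rr - u + ℓw x) / β := by
      field_simp; ring
    have : 0 ≤ rr - u / β - (-β⁻¹ * ℓw x) := by
      rw [heq]
      apply div_nonneg _ hβ.le
      linarith
    linarith
  have hsum : z = (p₁, r₁) + (p₂, r₂) := by
    have h1 : p₁ + p₂ = pp := by
      rw [hp₁def, hp₂def, add_assoc, ← add_smul]
      rw [show β⁻¹ + -β⁻¹ = 0 by ring, zero_smul, add_zero]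
    have h2 : r₁ + r₂ = rr := by rw [hr₁def, hr₂def]; ring
    rw [show (p₁, r₁) + (p₂, r₂) = (p₁ + p₂, r₁ + r₂) from rfl, h1, h2]
  rw [hsum]
  exact Set.add_mem_add hmem₁ hmem₂

end SumRule

lemma convex_sublevel {h : X → EReal} (hconv : Convex ℝ (epiFn h)) :
    Convex ℝ {x | h x ≤ (0 : EReal)} := by
  intro x hx y hy c d hc hd hcd
  have hx' : ((x : X), (0:ℝ)) ∈ epiFn h := hx
  have hy' : ((y : X), (0:ℝ)) ∈ epiFn h := hy
  have := hconv hx' hy' hc hd hcd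
  rw [show c • ((x : X), (0:ℝ)) + d • (y, (0:ℝ)) = (c • x + d • y, c * 0 + d * 0) from rfl]
    at this
  simp only [mul_zero, add_zero] at this; exact this

lemma solSet_eq {I : Type*} (C : Set X) (f : I → X → EReal) :
    solSet C f = C ∩ ⋂ i, {x | f i x ≤ (0 : EReal)} := by
  ext x
  simp [solSet, Set.mem_iInter]


/-- Lemma 4: under FM and continuity of `f` at a point of `A`,
`epi f* + K = epi (f + δ_A)*` and in particular `epi f* + K` is weak*-closed. -/
theorem stmt5 [IsTopologicalAddGroup X] [ContinuousSMul ℝ X] [LocallyConvexSpace ℝ X] [T2Space X] {I : Type*} (C : Set X) (hCne : C.Nonempty) (hCcl : IsClosed C) (hCcv : Convex ℝ C)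
    (f : I → X → EReal) (hf : ∀ i, InGamma (f i))
    (g : X → EReal) (hg : InGamma g)
    (hFM : IsFM C f)
    (hcont : ∃ a ∈ solSet C f, (∃ r : ℝ, g a = (r : EReal)) ∧ ContinuousAt g a) :
    epiFn (conjFn g) + charCone C f =
        epiFn (conjFn (fun x => g x + indicatorE (solSet C f) x)) ∧
      IsClosed (epiFn (conjFn g) + charCone C f) := by
  obtain ⟨a, haA, ⟨ra, hra⟩, hconta⟩ := hcont
  have hKeq := charCone_eq hCne hCcl hCcv hf hFM.1 hFM.2
  have hAcv : Convex ℝ (solSet C f) := by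
    rw [solSet_eq]
    exact hCcv.inter (convex_iInter fun i => convex_sublevel (hf i).2.2.1)
  have hsum := epi_conj_sum_eq hg.1 hg.2.2.1 hAcv haA hra hconta
  constructor
  · rw [hKeq]
    exact hsum
  · rw [hKeq, hsum]
    exact isClosed_epi_conj _
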